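/- Let ℓ and N be natural numbers and define u : ℂ → ℂ by u(w) = 2ℓ·log|w| − N·log(1+|w|²) (real logarithms, coerced to ℂ). Then for every z ∈ ℂ with z ≠ 0: ∂(∂̄ u)(z) = −N/(1+|z|²)². (This is the Poincaré–Lelong identity Δ_{g₀} log Φ = −4πN/V for Φ(z) = |z|^(2ℓ)/(1+|z|²)^N, valid away from the zeros of the Higgs field φ = z^ℓ, since Δ_eucl = 4·∂∂̄ and Δ_{g₀} = (π/V)(1+|z|²)²·Δ_eucl for the round metric g₀ of volume V.) -/

import Mathlib

/-- The Wirtinger derivative `∂u`. -/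
noncomputable def wdz (u : ℂ → ℂ) (z : ℂ) : ℂ :=
  (1 / 2) * (fderiv ℝ u z 1 - Complex.I • fderiv ℝ u z Complex.I)

/-- The Wirtinger derivative `∂̄u`. -/
noncomputable def wdzbar (u : ℂ → ℂ) (z : ℂ) : ℂ :=
  (1 / 2) * (fderiv ℝ u z 1 + Complex.I • fderiv ℝ u z Complex.I)

open Complex

noncomputable def plG (ℓ N : ℕ) : ℂ → ℂ := fun w =>
  (ℓ : ℂ) * w * (((‖w‖ ^ 2)⁻¹ : ℝ) : ℂ) - (N : ℂ) * w * ((((1 : ℝ) + ‖w‖ ^ 2)⁻¹ : ℝ) : ℂ)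

set_option maxHeartbeats 2000000 in
lemma plG_eval (ℓ N : ℕ) (z : ℂ) (hz : z ≠ 0) :
    ∃ D : ℂ →L[ℝ] ℂ, HasFDerivAt (plG ℓ N) D z ∧
      (1 / 2 : ℂ) * (D 1 - Complex.I * D Complex.I)
        = -(N : ℂ) / ((1 : ℂ) + (‖z‖ : ℂ) ^ 2) ^ 2 := by
  have hs : ‖z‖ ^ 2 ≠ 0 := pow_ne_zero _ (norm_ne_zero_iff.mpr hz)
  have hs1 : (1 : ℝ) + ‖z‖ ^ 2 ≠ 0 := by positivity
  have hn : HasFDerivAt (fun v : ℂ => ‖v‖ ^ 2) ((2:ℕ) • (innerSL ℝ z)) z :=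
    (hasStrictFDerivAt_norm_sq z).hasFDerivAt
  have hn1 := hn.const_add (1 : ℝ)
  have h1 := ((hasFDerivAt_id z).mul
    (Complex.ofRealCLM.hasFDerivAt.comp z
      ((hasDerivAt_inv hs).comp_hasFDerivAt z hn))).const_mul (ℓ : ℂ)
  have h2 := ((hasFDerivAt_id z).mul
    (Complex.ofRealCLM.hasFDerivAt.comp z
      ((hasDerivAt_inv hs1).comp_hasFDerivAt z hn1))).const_mul (N : ℂ)
  have h := h1.sub h2
  have hG : HasFDerivAt (plG ℓ N) _ z := h.congr_of_eventuallyEq (Filter.Eventually.of_forall (fun v => by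
    unfold plG; simp [Function.comp]; ring))
  refine ⟨_, hG, ?_⟩
  · have hre : ((innerSL ℝ z) 1 : ℝ) = z.re := by
      simp [Complex.inner]
    have him : ((innerSL ℝ z) Complex.I : ℝ) = z.im := by
      simp [Complex.inner]
    simp only [ContinuousLinearMap.add_apply, ContinuousLinearMap.sub_apply,
      ContinuousLinearMap.smul_apply, ContinuousLinearMap.comp_apply,
      ContinuousLinearMap.id_apply, hre, him, Complex.ofRealCLM_apply,
      Complex.real_smul, smul_eq_mul]
    set a := z.re with ha; set b := z.im with hb
    have hz2 : z = (a : ℂ) + (b : ℂ) * Complex.I := (Complex.re_add_im z).symm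
    have hsq : ‖z‖ ^ 2 = a ^ 2 + b ^ 2 := by
      rw [Complex.sq_norm, Complex.normSq_apply]; ring
    have hsr : a ^ 2 + b ^ 2 ≠ 0 := hsq ▸ hs
    have hsr1 : (1 : ℝ) + (a ^ 2 + b ^ 2) ≠ 0 := by positivity
    have hrc : ((‖z‖ : ℝ) : ℂ) ^ 2 = ((a ^ 2 + b ^ 2 : ℝ) : ℂ) := by
      rw [← Complex.ofReal_pow, hsq]
    have hc1 : ((a : ℂ) ^ 2 + (b : ℂ) ^ 2) ≠ 0 := by
      have : ((a ^ 2 + b ^ 2 : ℝ) : ℂ) ≠ 0 := by exact_mod_cast hsr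
      push_cast at this; exact this
    have hc2 : (1 + (a : ℂ) ^ 2 + (b : ℂ) ^ 2) ≠ 0 := by
      have : ((1 + (a ^ 2 + b ^ 2) : ℝ) : ℂ) ≠ 0 := by exact_mod_cast hsr1
      push_cast at this; rw [← add_assoc] at this; exact this
    simp only [Function.comp, id, smul_eq_mul, hsq, Complex.ofRealCLM_apply]
    rw [hrc, hz2]
    push_cast
    field_simp
    ring_nf
    simp only [Complex.I_sq]
    ring_nf

set_option maxHeartbeats 2000000 in
lemma wdzbar_eq (ℓ N : ℕ) (w : ℂ) (hw : w ≠ 0) :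
    wdzbar (fun v : ℂ =>
        ((2 * (ℓ : ℝ) * Real.log (‖v‖)
          - (N : ℝ) * Real.log (1 + ‖v‖ ^ 2) : ℝ) : ℂ)) w = plG ℓ N w := by
  have hs : ‖w‖ ^ 2 ≠ 0 := pow_ne_zero _ (norm_ne_zero_iff.mpr hw)
  have hs1 : (1 : ℝ) + ‖w‖ ^ 2 ≠ 0 := by positivity
  have hn : HasFDerivAt (fun v : ℂ => ‖v‖ ^ 2) ((2:ℕ) • (innerSL ℝ w)) w :=
    (hasStrictFDerivAt_norm_sq w).hasFDerivAt
  have hF := ((hn.log hs).const_mul ((ℓ:ℝ))).sub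
    (((hn.const_add (1:ℝ)).log hs1).const_mul ((N:ℝ)))
  have hU := Complex.ofRealCLM.hasFDerivAt.comp w hF
  have hU' : HasFDerivAt (fun v : ℂ =>
      ((2 * (ℓ : ℝ) * Real.log (‖v‖)
        - (N : ℝ) * Real.log (1 + ‖v‖ ^ 2) : ℝ) : ℂ)) _ w :=
    hU.congr_of_eventuallyEq (Filter.Eventually.of_forall (fun v => by
      simp only [Function.comp, Complex.ofRealCLM_apply,
        Real.log_pow, Pi.sub_apply]
      push_cast
      ring))
  unfold wdzbar
  rw [hU'.fderiv]
  have hre : ((innerSL ℝ w) 1 : ℝ) = w.re := by simp [Complex.inner]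
  have him : ((innerSL ℝ w) Complex.I : ℝ) = w.im := by simp [Complex.inner]
  set a := w.re with ha; set b := w.im with hb
  have hw2 : w = (a : ℂ) + (b : ℂ) * Complex.I := (Complex.re_add_im w).symm
  have hsq : ‖w‖ ^ 2 = a ^ 2 + b ^ 2 := by
    rw [Complex.sq_norm, Complex.normSq_apply]; ring
  have hsr : a ^ 2 + b ^ 2 ≠ 0 := hsq ▸ hs
  have hsr1 : (1 : ℝ) + (a ^ 2 + b ^ 2) ≠ 0 := by positivity
  have hc1 : ((a : ℂ) ^ 2 + (b : ℂ) ^ 2) ≠ 0 := by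
    have : ((a ^ 2 + b ^ 2 : ℝ) : ℂ) ≠ 0 := by exact_mod_cast hsr
    push_cast at this; exact this
  have hc2 : (1 + (a : ℂ) ^ 2 + (b : ℂ) ^ 2) ≠ 0 := by
    have : ((1 + (a ^ 2 + b ^ 2) : ℝ) : ℂ) ≠ 0 := by exact_mod_cast hsr1
    push_cast at this; rw [← add_assoc] at this; exact this
  unfold plG
  simp only [ContinuousLinearMap.comp_apply, ContinuousLinearMap.sub_apply,
    ContinuousLinearMap.smul_apply, hre, him, Complex.ofRealCLM_apply,
    smul_eq_mul, hsq]
  rw [hw2]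
  push_cast
  field_simp
  ring

theorem poincare_lelong_away_from_zeros (ℓ N : ℕ) (z : ℂ) (hz : z ≠ 0) :
    wdz (fun w : ℂ => wdzbar (fun v : ℂ =>
        ((2 * (ℓ : ℝ) * Real.log (‖v‖)
          - (N : ℝ) * Real.log (1 + ‖v‖ ^ 2) : ℝ) : ℂ)) w) z
      = -(N : ℂ) / (1 + ((‖z‖ : ℝ) : ℂ) ^ 2) ^ 2 := by
  have hev : (fun w : ℂ => wdzbar (fun v : ℂ =>
      ((2 * (ℓ : ℝ) * Real.log (‖v‖)
        - (N : ℝ) * Real.log (1 + ‖v‖ ^ 2) : ℝ) : ℂ)) w) =ᶠ[nhds z] plG ℓ N :=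
    (eventually_ne_nhds hz).mono fun w hw => wdzbar_eq ℓ N w hw
  obtain ⟨D, hD, hval⟩ := plG_eval ℓ N z hz
  unfold wdz
  rw [hev.fderiv_eq, hD.fderiv]
  simpa [smul_eq_mul] using hval
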